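/- Let α > -1 be real, let N ≥ 1, and let k, r be integers with 0 ≤ k, r ≤ N-1. Then the sum S(α;k,r,N) = Σ_{n=0}^{N-1} n! Γ(α+n+1) / ((n-k)!(n-r)!) equals (-1)^r Γ(α+r+1) r! / (N-1-k)! times Σ_{i=0}^r (Γ(N+i+α+1)/Γ(i+α+1)) · (-1)^i / (i! (r-i)! (α+k+i+1)). -/

import Mathlib

open Finset

noncomputable def invFact (n : ℤ) : ℝ :=
  if 0 ≤ n then ((n.toNat).factorial : ℝ)⁻¹ else 0

-- basic facts
lemma invFact_nonneg_eq (n : ℕ) (k : ℕ) (h : k ≤ n) :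
    invFact ((n : ℤ) - k) = ((n - k).factorial : ℝ)⁻¹ := by
  have h0 : (0:ℤ) ≤ (n:ℤ) - k := by omega
  rw [invFact, if_pos h0]
  have : ((n:ℤ) - k).toNat = n - k := by omega
  rw [this]

lemma invFact_neg_eq (n : ℕ) (k : ℕ) (h : n < k) : invFact ((n : ℤ) - k) = 0 := by
  rw [invFact, if_neg (by omega)]

lemma fact_mul_invFact (n r : ℕ) :
    (n.factorial : ℝ) * invFact ((n : ℤ) - r) = (n.descFactorial r : ℝ) := by
  rcases le_or_gt r n with h | h
  · rw [invFact_nonneg_eq n r h, ← Nat.factorial_mul_descFactorial h]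
    push_cast
    rw [mul_comm ((n-r).factorial : ℝ)]
    rw [mul_assoc, mul_inv_cancel₀ (by positivity), mul_one]
  · rw [invFact_neg_eq n r h, Nat.descFactorial_of_lt h]
    simp

lemma gauss_sum (β : ℝ) (hβ : 0 < β) (M : ℕ) :
    ∑ m ∈ range (M + 1), Real.Gamma (β + m) / m.factorial
      = Real.Gamma (β + M + 1) / (β * M.factorial) := by
  induction M with
  | zero =>
      simp only [zero_add, range_one, sum_singleton, Nat.cast_zero, add_zero, Nat.factorial_zero,
        Nat.cast_one, mul_one]
      rw [Real.Gamma_add_one hβ.ne']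
      field_simp
  | succ M ih =>
      rw [Finset.sum_range_succ, ih]
      have h1 : β + (M+1:ℕ) + 1 = (β + M + 1) + 1 := by push_cast; ring
      have h2 : (0:ℝ) < β + M + 1 := by positivity
      rw [h1, Real.Gamma_add_one h2.ne']
      have h3 : β + ((M+1:ℕ):ℝ) = β + M + 1 := by push_cast; ring
      rw [h3]
      have hM : (0:ℝ) < M.factorial := by positivity
      field_simp [Nat.factorial_succ]
      push_cast [Nat.factorial_succ]
      ring

lemma newton (α : ℝ) (hα : -1 < α) (r : ℕ) : ∀ n : ℕ,
    (n.descFactorial r : ℝ) * Real.Gamma (α + n + 1)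
      = ∑ i ∈ range (r + 1), (-1:ℝ)^(r+i) * (r.choose i) *
          (Real.Gamma (α + r + 1) / Real.Gamma (α + i + 1)) * Real.Gamma (α + n + i + 1) := by
  have hpos : ∀ j : ℕ, (0:ℝ) < α + j + 1 := fun j => by
    have : (0:ℝ) ≤ j := Nat.cast_nonneg j
    linarith
  have hG : ∀ j : ℕ, Real.Gamma (α + j + 1) ≠ 0 := fun j =>
    (Real.Gamma_pos_of_pos (hpos j)).ne'
  induction r with
  | zero =>
      intro n
      have := hG 0
      simp only [Nat.cast_zero, add_zero] at this
      simp [div_self this]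
  | succ r ih =>
      intro n
      have hcast : (n.descFactorial (r+1) : ℝ) = ((n:ℝ) - r) * (n.descFactorial r : ℝ) := by
        rcases le_or_gt r n with h | h
        · rw [Nat.descFactorial_succ]
          push_cast [h]
          ring
        · rw [Nat.descFactorial_of_lt h, Nat.descFactorial_of_lt (by omega)]
          simp
      rw [hcast, mul_assoc, ih n, Finset.mul_sum]
      -- LHS = Σ_i (n - r) * b_i * Γ(α+n+i+1)
      have key : ∀ i ∈ range (r+1),
          ((n:ℝ) - r) * ((-1:ℝ)^(r+i) * (r.choose i) *
            (Real.Gamma (α + r + 1) / Real.Gamma (α + i + 1)) * Real.Gamma (α + n + i + 1))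
          = ((-1:ℝ)^(r+i) * (r.choose i) *
              (Real.Gamma (α + r + 1) / Real.Gamma (α + i + 1)) * Real.Gamma (α + n + (i+1) + 1))
            - ((α + i + r + 1) * ((-1:ℝ)^(r+i) * (r.choose i) *
              (Real.Gamma (α + r + 1) / Real.Gamma (α + i + 1)) * Real.Gamma (α + n + i + 1))) := by
        intro i _
        have h1 : α + (n:ℝ) + (i+1) + 1 = (α + n + i + 1) + 1 := by ring
        have h2 : (0:ℝ) < α + n + i + 1 := by
          have : (0:ℝ) ≤ (n:ℝ) + i := by positivity
          linarith
        rw [h1, Real.Gamma_add_one h2.ne']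
        ring
      rw [Finset.sum_congr rfl key, Finset.sum_sub_distrib]
      set G : ℕ → ℝ := fun i => (α + i + r + 1) * ((-1:ℝ)^(r+i) * (r.choose i) *
        (Real.Gamma (α + r + 1) / Real.Gamma (α + i + 1)) * Real.Gamma (α + n + i + 1)) with hG_def
      set B : ℕ → ℝ := fun i => (-1:ℝ)^(r+1+i) * ((r+1).choose i) *
        (Real.Gamma (α + (r+1:ℕ) + 1) / Real.Gamma (α + i + 1)) * Real.Gamma (α + n + i + 1)
        with hB_def
      have h2 : ∑ i ∈ range (r+1), G i = (∑ i ∈ range (r+1), G (i+1)) + G 0 := by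
        rw [Finset.sum_range_succ' G r, Finset.sum_range_succ (fun i => G (i+1)) r]
        have : G (r+1) = 0 := by
          simp [hG_def, Nat.choose_succ_self]
        rw [this, add_zero]
      rw [h2]
      have h3 : (∑ i ∈ range (r+1+1), B i) = (∑ i ∈ range (r+1), B (i+1)) + B 0 :=
        Finset.sum_range_succ' B (r+1)
      rw [h3]
      have hterm : ∀ i ∈ range (r+1),
          (-1:ℝ)^(r+i) * (r.choose i) * (Real.Gamma (α + r + 1) / Real.Gamma (α + i + 1)) *
            Real.Gamma (α + n + (i+1) + 1) - G (i+1) = B (i+1) := by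
        intro i hi
        have hi' : i ≤ r := by
          simpa using Finset.mem_range_succ_iff.mp hi
        simp only [hG_def, hB_def]
        have e1 : α + ((i+1:ℕ):ℝ) + 1 = (α + i + 1) + 1 := by push_cast; ring
        have e2 : α + ((r+1:ℕ):ℝ) + 1 = (α + r + 1) + 1 := by push_cast; ring
        rw [e1, e2, Real.Gamma_add_one (hpos i).ne', Real.Gamma_add_one (hpos r).ne']
        have hΓn : α + (n:ℝ) + ((i+1:ℕ):ℝ) + 1 = α + n + (i+1) + 1 := by push_cast; ring
        rw [hΓn]
        have hs1 : ((-1:ℝ))^(r+(i+1)) = -(-1:ℝ)^(r+i) := by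
          rw [show r+(i+1) = (r+i)+1 from by ring, pow_succ]; ring
        have hs2 : ((-1:ℝ))^(r+1+(i+1)) = (-1:ℝ)^(r+i) := by
          rw [show r+1+(i+1) = (r+i)+2 from by ring, pow_add]; norm_num
        rw [hs1, hs2, Nat.choose_succ_succ r i]
        have hcr : ((r.choose (i+1) : ℝ)) * ((i:ℝ)+1) = (r.choose i) * ((r:ℝ) - i) := by
          have h := Nat.choose_succ_right_eq r i
          have h' : ((r.choose (i+1) * (i+1) : ℕ) : ℝ) = ((r.choose i * (r - i) : ℕ) : ℝ) := by
            rw [h]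
          push_cast [Nat.cast_sub hi'] at h'
          linarith [h']
        have hscalar : ((r.choose i : ℝ))*(α+i+1) + (α+i+r+2)*(r.choose (i+1))
            = ((r.choose i : ℝ) + (r.choose (i+1)))*(α+r+1) := by
          linear_combination hcr
        have hΓipos := (Real.Gamma_pos_of_pos (hpos i)).ne'
        have hden : (α + (i:ℝ) + 1) ≠ 0 := (hpos i).ne'
        set ε : ℝ := (-1:ℝ)^(r+i) with hε
        set Γr : ℝ := Real.Gamma (α + r + 1)
        set Γi : ℝ := Real.Gamma (α + i + 1)
        set Γn : ℝ := Real.Gamma (α + n + ((i:ℝ)+1) + 1)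
        push_cast
        calc ε * (r.choose i) * (Γr / Γi) * Γn -
              (α + ((i:ℝ)+1) + r + 1) * (-ε * (r.choose (i+1)) * (Γr / ((α+i+1) * Γi)) * Γn)
            = (ε * Γr * Γn / ((α+i+1) * Γi)) *
                (((r.choose i : ℝ))*(α+i+1) + (α+i+r+2)*(r.choose (i+1))) := by
              field_simp
              ring
          _ = (ε * Γr * Γn / ((α+i+1) * Γi)) *
                (((r.choose i : ℝ) + (r.choose (i+1)))*(α+r+1)) := by rw [hscalar]
          _ = ε * ((r.choose i : ℝ) + (r.choose (i+1))) * ((α+r+1) * Γr / ((α+i+1) * Γi)) * Γn := by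
              field_simp

      have hconst : B 0 = - G 0 := by
        simp only [hG_def, hB_def]
        have e2 : α + ((r+1:ℕ):ℝ) + 1 = (α + r + 1) + 1 := by push_cast; ring
        rw [e2, Real.Gamma_add_one (hpos r).ne']
        have hs : ((-1:ℝ))^(r+1+0) = -(-1:ℝ)^(r+0) := by
          rw [show r+1+0 = (r+0)+1 from by ring, pow_succ]; ring
        rw [hs]
        simp only [Nat.choose_zero_right, Nat.cast_one, Nat.cast_zero]
        push_cast
        ring
      calc (∑ i ∈ range (r+1), (-1:ℝ)^(r+i) * (r.choose i) *
              (Real.Gamma (α + r + 1) / Real.Gamma (α + i + 1)) *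
              Real.Gamma (α + n + (i+1) + 1))
            - ((∑ i ∈ range (r+1), G (i+1)) + G 0)
          = (∑ i ∈ range (r+1), ((-1:ℝ)^(r+i) * (r.choose i) *
              (Real.Gamma (α + r + 1) / Real.Gamma (α + i + 1)) *
              Real.Gamma (α + n + (i+1) + 1) - G (i+1))) - G 0 := by
            rw [Finset.sum_sub_distrib]; ring
        _ = (∑ i ∈ range (r+1), B (i+1)) + B 0 := by
            rw [Finset.sum_congr rfl hterm, hconst]; ring

lemma gammaInvFactSum (c : ℝ) (hc : 0 < c) (N k : ℕ) (h : k < N) :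
    ∑ n ∈ range N, Real.Gamma (c + n) * invFact ((n:ℤ) - k)
      = Real.Gamma (c + N) / ((c + k) * ((N - 1 - k).factorial : ℝ)) := by
  have h0 : ∑ n ∈ Finset.Ico 0 k, Real.Gamma (c + n) * invFact ((n:ℤ) - k) = 0 := by
    apply Finset.sum_eq_zero
    intro n hn
    rw [Finset.mem_Ico] at hn
    rw [invFact_neg_eq n k hn.2, mul_zero]
  rw [Finset.range_eq_Ico, ← Finset.sum_Ico_consecutive _ (Nat.zero_le k) h.le, h0, zero_add,
    Finset.sum_Ico_eq_sum_range]
  have hM : N - k = (N - 1 - k) + 1 := by omega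
  rw [hM]
  set M := N - 1 - k with hMdef
  have hck : (0:ℝ) < c + k := by positivity
  have step : ∀ m ∈ range (M + 1),
      Real.Gamma (c + (k + m : ℕ)) * invFact (((k + m : ℕ) : ℤ) - k)
        = Real.Gamma ((c + k) + m) / m.factorial := by
    intro m _
    have e1 : c + ((k + m : ℕ) : ℝ) = (c + k) + m := by push_cast; ring
    have e2 : invFact (((k + m : ℕ) : ℤ) - k) = ((m.factorial : ℝ))⁻¹ := by
      rw [invFact_nonneg_eq (k + m) k (Nat.le_add_right k m), Nat.add_sub_cancel_left]
    rw [e1, e2, div_eq_mul_inv]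
  rw [Finset.sum_congr rfl step, gauss_sum (c + k) hck M]
  have e3 : (c + k) + M + 1 = c + N := by
    have h1 : M + k + 1 = N := by omega
    have h2 : ((M + k + 1 : ℕ) : ℝ) = (N : ℝ) := by rw [h1]
    push_cast at h2
    linarith
  rw [e3]

theorem S_closed_form (α : ℝ) (hα : -1 < α) (N : ℕ) (hN : 1 ≤ N)
    (k r : ℕ) (hk : k ≤ N - 1) (hr : r ≤ N - 1) :
    ∑ n ∈ Finset.range N,
      (n.factorial : ℝ) * Real.Gamma (α + n + 1) *
        invFact ((n : ℤ) - k) * invFact ((n : ℤ) - r)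
      = (-1 : ℝ) ^ r * Real.Gamma (α + r + 1) * (r.factorial : ℝ) /
          ((N - 1 - k).factorial : ℝ) *
        ∑ i ∈ Finset.range (r + 1),
          (Real.Gamma ((N : ℝ) + i + α + 1) / Real.Gamma ((i : ℝ) + α + 1)) *
            (-1 : ℝ) ^ i /
              ((i.factorial : ℝ) * ((r - i).factorial : ℝ) * (α + k + i + 1)) := by
  have hkN : k < N := by omega
  have hpos : ∀ j : ℕ, (0:ℝ) < α + j + 1 := fun j => by
    have : (0:ℝ) ≤ j := Nat.cast_nonneg j
    linarith
  have step1 : ∀ n ∈ range N,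
      (n.factorial : ℝ) * Real.Gamma (α + n + 1) * invFact ((n : ℤ) - k) * invFact ((n : ℤ) - r)
        = ∑ i ∈ range (r + 1), ((-1:ℝ)^(r+i) * (r.choose i) *
            (Real.Gamma (α + r + 1) / Real.Gamma (α + i + 1))) *
            (Real.Gamma ((α + i + 1) + n) * invFact ((n : ℤ) - k)) := by
    intro n _
    have h1 : (n.factorial : ℝ) * Real.Gamma (α + n + 1) * invFact ((n : ℤ) - k) *
          invFact ((n : ℤ) - r)
        = ((n.factorial : ℝ) * invFact ((n : ℤ) - r)) * Real.Gamma (α + n + 1) *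
            invFact ((n : ℤ) - k) := by ring
    rw [h1, fact_mul_invFact n r, newton α hα r n, Finset.sum_mul]
    apply Finset.sum_congr rfl
    intro i _
    have e : α + (n:ℝ) + i + 1 = (α + i + 1) + n := by ring
    rw [e]
    ring
  rw [Finset.sum_congr rfl step1, Finset.sum_comm]
  have step2 : ∀ i ∈ range (r + 1),
      ∑ n ∈ range N, ((-1:ℝ)^(r+i) * (r.choose i) *
          (Real.Gamma (α + r + 1) / Real.Gamma (α + i + 1))) *
          (Real.Gamma ((α + i + 1) + n) * invFact ((n : ℤ) - k))
        = ((-1:ℝ)^(r+i) * (r.choose i) * (Real.Gamma (α + r + 1) / Real.Gamma (α + i + 1))) *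
            (Real.Gamma ((α + i + 1) + N) / ((α + i + 1 + k) * ((N - 1 - k).factorial : ℝ))) := by
    intro i _
    rw [← Finset.mul_sum, gammaInvFactSum (α + i + 1) (hpos i) N k hkN]
  rw [Finset.sum_congr rfl step2, Finset.mul_sum]
  apply Finset.sum_congr rfl
  intro i hi
  have hi' : i ≤ r := by simpa using Finset.mem_range_succ_iff.mp hi
  have hfact : ((r.choose i : ℝ)) * (i.factorial : ℝ) * ((r - i).factorial : ℝ)
      = (r.factorial : ℝ) := by
    exact_mod_cast congrArg (Nat.cast : ℕ → ℝ) (Nat.choose_mul_factorial_mul_factorial hi')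
  have eΓ1 : Real.Gamma ((α + i + 1) + N) = Real.Gamma ((N:ℝ) + i + α + 1) := by
    congr 1; ring
  have eΓ2 : Real.Gamma (α + (i:ℝ) + 1) = Real.Gamma ((i:ℝ) + α + 1) := by
    congr 1; ring
  have hs : ((-1:ℝ))^(r+i) = (-1:ℝ)^r * (-1:ℝ)^i := pow_add (-1) r i
  rw [eΓ1, eΓ2, hs]
  have hΓi : Real.Gamma ((i:ℝ) + α + 1) ≠ 0 := by
    apply (Real.Gamma_pos_of_pos _).ne'
    have := hpos i
    linarith
  have hden : α + (k:ℝ) + i + 1 ≠ 0 := by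
    have : (0:ℝ) ≤ (k:ℝ) + i := by positivity
    have := hα
    intro hcon
    nlinarith
  have hden2 : (α:ℝ) + i + 1 + k ≠ 0 := by
    intro hcon; apply hden; linarith
  have hfa : ((N - 1 - k).factorial : ℝ) ≠ 0 := by positivity
  have hfi : (i.factorial : ℝ) ≠ 0 := by positivity
  have hfri : ((r - i).factorial : ℝ) ≠ 0 := by positivity
  rw [← hfact]
  field_simp
  ring
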